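/- Let n ≥ 1 and let A be a tournament payoff matrix of size 2n (a real skew-symmetric matrix with zero diagonal and all off-diagonal entries equal to 1 or -1). Then det A ≠ 0, and consequently there is no probability vector v with A.mulVec v = 0. (Every 2n-object RPS game is unplayable.) -/

import Mathlib

open Matrix

/-- A probability vector: nonnegative entries summing to `1`. -/
def IsProbVec {m : ℕ} (v : Fin m → ℝ) : Prop := (∀ i, 0 ≤ v i) ∧ ∑ i, v i = 1

/-- A tournament payoff matrix: zero diagonal, off-diagonal entries `±1`,
skew-symmetric. -/
def IsTournament {m : ℕ} (A : Matrix (Fin m) (Fin m) ℝ) : Prop :=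
  (∀ i, A i i = 0) ∧ ∀ i j : Fin m, i ≠ j → (A i j = 1 ∨ A i j = -1) ∧ A j i = -A i j

/-- Every `2n`-object RPS game is unplayable: the payoff matrix has nonzero determinant,
hence no probability vector lies in its kernel. -/
theorem even_RPS_unplayable (n : ℕ) (hn : 1 ≤ n)
    (A : Matrix (Fin (2 * n)) (Fin (2 * n)) ℝ) (hA : IsTournament A) :
    A.det ≠ 0 ∧ ¬ ∃ v : Fin (2 * n) → ℝ, IsProbVec v ∧ A.mulVec v = 0 := by
  classical
  -- integer matrix with the same entries
  set B : Matrix (Fin (2 * n)) (Fin (2 * n)) ℤ :=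
    fun i j => if i = j then 0 else if A i j = 1 then 1 else -1 with hB
  have hAB : A = B.map (Int.cast : ℤ → ℝ) := by
    ext i j
    rw [Matrix.map_apply]
    by_cases h : i = j
    · simp [hB, Matrix.map_apply, h, hA.1]
    · rcases (hA.2 i j h).1 with h1 | h1 <;> simp [hB, Matrix.map_apply, h, h1] <;> norm_num
  -- mod-2 reduction of B is J - 1
  have hC : B.map (Int.cast : ℤ → ZMod 2) =
      1 + replicateCol Unit (fun _ => (1 : ZMod 2)) * replicateRow Unit (fun _ => (1 : ZMod 2)) := by
    ext i j
    rw [Matrix.map_apply]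
    by_cases h : i = j
    · subst h
      simp [hB, Matrix.map_apply, Matrix.mul_apply, Matrix.one_apply]
      decide
    · by_cases h1 : A i j = 1 <;>
        simp [hB, Matrix.map_apply, Matrix.mul_apply, Matrix.one_apply, h, h1] <;> norm_num <;>
        decide
  have hdetC : (B.map (Int.cast : ℤ → ZMod 2)).det = 1 := by
    rw [hC, det_one_add_replicateCol_mul_replicateRow]
    have : ((fun _ : Fin (2 * n) => (1 : ZMod 2)) ⬝ᵥ fun _ => (1 : ZMod 2)) = ((2 * n : ℕ) : ZMod 2) := by
      simp [dotProduct]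
    rw [this]
    simp [Nat.cast_mul]
    exact Or.inl (by decide)
  have hdetB : B.det ≠ 0 := by
    intro h
    have h2 := RingHom.map_det (Int.castRingHom (ZMod 2)) B
    rw [h, map_zero, RingHom.mapMatrix_apply, Int.coe_castRingHom, hdetC] at h2
    exact one_ne_zero h2.symm
  have hdetA : A.det ≠ 0 := by
    rw [hAB,
      show B.map (Int.cast : ℤ → ℝ) = (Int.castRingHom ℝ).mapMatrix B from rfl,
      ← RingHom.map_det (Int.castRingHom ℝ) B, Int.coe_castRingHom]
    show (B.det : ℝ) ≠ 0
    exact Int.cast_ne_zero.mpr hdetB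
  refine ⟨hdetA, ?_⟩
  rintro ⟨v, ⟨hv0, hv1⟩, hvk⟩
  have : v = 0 := Matrix.eq_zero_of_mulVec_eq_zero hdetA hvk
  rw [this] at hv1
  simp at hv1
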